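/- Let K be a convex body of constant width 1 in ℝⁿ, u a unit vector, t ⊥ u a unit vector. Define the lower tangential radius of curvature ρ̄_i(K,u,t) := liminf_{w→u, ⟨w,t⟩>0} (h(K,w) − ⟨x_K(u),w⟩)/(1 − ⟨u,w⟩), and the upper tangential radius of curvature ρ̄_s analogously with limsup. Then ρ̄_s(K,u,t) + ρ̄_i(K,−u,−t) = 1. -/

import Mathlib

open scoped RealInnerProductSpace
open Metric Filter

noncomputable def supp {n : ℕ} (K : Set (EuclideanSpace ℝ (Fin n)))
    (u : EuclideanSpace ℝ (Fin n)) : ℝ :=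
  sSup ((fun x => ⟪x, u⟫) '' K)

theorem tangential_radii_sum_one {n : ℕ} (K : Set (EuclideanSpace ℝ (Fin n)))
    (hKc : IsCompact K) (hKconv : Convex ℝ K) (hKne : K.Nonempty)
    (hwidth : ∀ v : EuclideanSpace ℝ (Fin n), ‖v‖ = 1 → supp K v + supp K (-v) = 1)
    (u t x y : EuclideanSpace ℝ (Fin n)) (hu : ‖u‖ = 1) (ht : ‖t‖ = 1)
    (hut : ⟪u, t⟫ = 0)
    (hxK : x ∈ K) (hx : ⟪x, u⟫ = supp K u)
    (hyK : y ∈ K) (hy : ⟪y, -u⟫ = supp K (-u)) :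
    Filter.limsup (fun w => (supp K w - ⟪x, w⟫) / (1 - ⟪u, w⟫))
        (nhdsWithin u {w : EuclideanSpace ℝ (Fin n) | ‖w‖ = 1 ∧ 0 < ⟪w, t⟫}) +
      Filter.liminf (fun w => (supp K w - ⟪y, w⟫) / (1 - ⟪-u, w⟫))
        (nhdsWithin (-u) {w : EuclideanSpace ℝ (Fin n) | ‖w‖ = 1 ∧ 0 < ⟪w, -t⟫}) = 1 := by
  classical
  -- basic support function facts
  have hbdd : ∀ w : EuclideanSpace ℝ (Fin n), BddAbove ((fun z => ⟪z, w⟫) '' K) := fun w => by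
    have hc : Continuous (fun z : EuclideanSpace ℝ (Fin n) => ⟪z, w⟫) := continuous_id.inner continuous_const
    exact (hKc.image hc).bddAbove
  have hle : ∀ (w z : EuclideanSpace ℝ (Fin n)), z ∈ K → ⟪z, w⟫ ≤ supp K w := fun w z hz =>
    le_csSup (hbdd w) ⟨z, hz, rfl⟩
  -- y = x - u
  have hxy : ⟪x - y, u⟫ = 1 := by
    have h1 := hwidth u hu
    rw [inner_sub_left, hx]
    have : ⟪y, u⟫ = -supp K (-u) := by
      rw [inner_neg_right] at hy; linarith
    rw [this]; linarith
  have hyxu : y = x - u := by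
    have hne : x - y ≠ 0 := by
      intro h
      rw [h, inner_zero_left] at hxy; norm_num at hxy
    have hnorm1 : ‖x - y‖ ≤ 1 := by
      set v : EuclideanSpace ℝ (Fin n) := ‖x - y‖⁻¹ • (x - y) with hv
      have hvn : ‖v‖ = 1 := by
        rw [hv, norm_smul, norm_inv, norm_norm]
        have : ‖x - y‖ ≠ 0 := norm_ne_zero_iff.mpr hne
        field_simp
      have h1 : ⟪x, v⟫ ≤ supp K v := hle v x hxK
      have h2 : ⟪y, -v⟫ ≤ supp K (-v) := hle (-v) y hyK
      have h3 := hwidth v hvn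
      have h4 : ⟪x - y, v⟫ ≤ 1 := by
        rw [inner_neg_right] at h2
        rw [inner_sub_left]; linarith
      have h5 : ⟪x - y, v⟫ = ‖x - y‖ := by
        rw [hv, real_inner_smul_right, real_inner_self_eq_norm_sq]
        have : ‖x - y‖ ≠ 0 := norm_ne_zero_iff.mpr hne
        field_simp
      linarith [h5 ▸ h4]
    have hcs : (1:ℝ) ≤ ‖x - y‖ * ‖u‖ := by
      calc (1:ℝ) = ⟪x - y, u⟫ := hxy.symm
        _ ≤ ‖x - y‖ * ‖u‖ := real_inner_le_norm _ _
    have hn1 : ‖x - y‖ = 1 := by rw [hu] at hcs; linarith [hcs]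
    have : x - y = u := (inner_eq_one_iff_of_norm_eq_one hn1 hu).mp hxy
    have := this
    abel_nf
    abel_nf at this
    linear_combination (norm := module) -this
  -- the set S and filter L
  set S : Set (EuclideanSpace ℝ (Fin n)) := {w : EuclideanSpace ℝ (Fin n) | ‖w‖ = 1 ∧ 0 < ⟪w, t⟫} with hS
  set L := nhdsWithin u S with hL
  set g : EuclideanSpace ℝ (Fin n) → ℝ := fun w => (supp K w - ⟪x, w⟫) / (1 - ⟪u, w⟫) with hg
  -- pointwise bounds on S
  have hden : ∀ w ∈ S, (0:ℝ) < 1 - ⟪u, w⟫ := by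
    rintro w ⟨hw1, hwt⟩
    have hne : u ≠ w := fun h => (ne_of_gt hwt) (h ▸ hut)
    have h1 : ⟪u, w⟫ ≤ 1 := by
      have := real_inner_le_norm u w; rw [hu, hw1] at this; linarith
    have h2 : ⟪u, w⟫ ≠ 1 := fun h => hne ((inner_eq_one_iff_of_norm_eq_one hu hw1).mp h)
    have h3 : ⟪u, w⟫ < 1 := lt_of_le_of_ne h1 h2
    linarith
  have hg0 : ∀ w ∈ S, 0 ≤ g w := by
    intro w hw
    exact div_nonneg (by linarith [hle w x hxK]) (le_of_lt (hden w hw))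
  have hg1 : ∀ w ∈ S, g w ≤ 1 := by
    rintro w hw
    obtain ⟨hw1, hwt⟩ := hw
    have h1 := hwidth w hw1
    have h2 : ⟪y, -w⟫ ≤ supp K (-w) := hle (-w) y hyK
    have h3 : supp K w - ⟪x, w⟫ ≤ 1 - ⟪u, w⟫ := by
      rw [hyxu, inner_neg_right, inner_sub_left] at h2
      linarith
    rw [hg]
    exact div_le_one_of_le₀ h3 (le_of_lt (hden w ⟨hw1, hwt⟩))
  -- L is NeBot
  have hLne : L.NeBot := by
    rw [hL, ← mem_closure_iff_nhdsWithin_neBot]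
    have hseq : Tendsto (fun k : ℕ => (Real.cos (1/(k+1)) • u + Real.sin (1/(k+1)) • t : EuclideanSpace ℝ (Fin n)))
        atTop (nhds u) := by
      have h0 : Tendsto (fun k : ℕ => (1:ℝ)/(k+1)) atTop (nhds 0) :=
        tendsto_one_div_add_atTop_nhds_zero_nat
      have hc : Tendsto (fun k : ℕ => Real.cos (1/(k+1))) atTop (nhds 1) := by
        simpa [Function.comp_def] using (Real.continuous_cos.continuousAt (x := (0:ℝ))).tendsto.comp h0
      have hs : Tendsto (fun k : ℕ => Real.sin (1/(k+1))) atTop (nhds 0) := by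
        simpa [Function.comp_def] using (Real.continuous_sin.continuousAt (x := (0:ℝ))).tendsto.comp h0
      have := (hc.smul_const u).add (hs.smul_const t)
      simpa using this
    refine mem_closure_of_tendsto hseq (Eventually.of_forall fun k => ?_)
    have hpos : 0 < (1:ℝ)/(k+1) := by positivity
    have hlt : (1:ℝ)/(k+1) ≤ 1 := by
      rw [div_le_one (by positivity)]; linarith [Nat.cast_nonneg (α := ℝ) k]
    have hsin : 0 < Real.sin (1/(k+1)) :=
      Real.sin_pos_of_pos_of_lt_pi hpos (lt_of_le_of_lt hlt (by linarith [Real.pi_gt_three]))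
    constructor
    · have : ‖(Real.cos (1/(k+1)) • u + Real.sin (1/(k+1)) • t : EuclideanSpace ℝ (Fin n))‖^2 = 1 := by
        rw [norm_add_sq_real, norm_smul, norm_smul, real_inner_smul_left,
          real_inner_smul_right, hut, hu, ht]
        simp only [Real.norm_eq_abs, mul_one, mul_zero, add_zero, mul_pow, sq_abs]
        nlinarith [Real.sin_sq_add_cos_sq (1/((k:ℝ)+1))]
      nlinarith [norm_nonneg (Real.cos (1/(k+1)) • u + Real.sin (1/(k+1)) • t : EuclideanSpace ℝ (Fin n))]
    · simp only [Set.mem_setOf_eq, inner_add_left, real_inner_smul_left]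
      rw [hut, real_inner_self_eq_norm_sq, ht]
      simpa using hsin
  -- boundedness facts
  have hev0 : ∀ᶠ w in L, 0 ≤ g w := eventually_nhdsWithin_of_forall hg0
  have hev1 : ∀ᶠ w in L, g w ≤ 1 := eventually_nhdsWithin_of_forall hg1
  have hbddAbove : L.IsBoundedUnder (· ≤ ·) g := ⟨1, hev1⟩
  have hbddBelow : L.IsBoundedUnder (· ≥ ·) g := ⟨0, hev0⟩
  have hcobddAbove : L.IsCoboundedUnder (· ≤ ·) g := hbddBelow.isCoboundedUnder_le
  -- rewrite second filter as map of neg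
  have hmap : nhdsWithin (-u) {w : EuclideanSpace ℝ (Fin n) | ‖w‖ = 1 ∧ 0 < ⟪w, -t⟫} = Filter.map Neg.neg L := by
    have h := (Homeomorph.neg (EuclideanSpace ℝ (Fin n))).isEmbedding.map_nhdsWithin_eq S u
    have hfun : ⇑(Homeomorph.neg (EuclideanSpace ℝ (Fin n)))
        = (Neg.neg : EuclideanSpace ℝ (Fin n) → EuclideanSpace ℝ (Fin n)) := rfl
    rw [hfun] at h
    rw [hL, h]
    congr 1
    ext w
    simp only [Set.mem_image, Set.mem_setOf_eq, hS]
    constructor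
    · rintro ⟨hw1, hwt⟩
      exact ⟨-w, ⟨by simpa using hw1, by simpa using hwt⟩, by simp⟩
    · rintro ⟨v, ⟨hv1, hvt⟩, rfl⟩
      exact ⟨by simpa using hv1, by simpa using hvt⟩
  rw [hmap]
  have hlim : Filter.liminf (fun w => (supp K w - ⟪y, w⟫) / (1 - ⟪-u, w⟫))
      (Filter.map Neg.neg L)
      = Filter.liminf (fun v => (supp K (-v) - ⟪y, -v⟫) / (1 - ⟪-u, -v⟫)) L := by
    rw [Filter.liminf, Filter.liminf, Filter.map_map]
    rfl
  rw [hlim]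
  have heq : ∀ᶠ v in L, (supp K (-v) - ⟪y, -v⟫) / (1 - ⟪-u, -v⟫) = 1 - g v := by
    refine eventually_nhdsWithin_of_forall (fun v hv => ?_)
    obtain ⟨hv1, hvt⟩ := hv
    have h1 := hwidth v hv1
    have hd := hden v ⟨hv1, hvt⟩
    have hsupp : supp K (-v) = 1 - supp K v := by linarith
    have hne0 : (1 : ℝ) - ⟪u, v⟫ ≠ 0 := ne_of_gt hd
    have hden2 : (1:ℝ) - ⟪-u, -v⟫ = 1 - ⟪u, v⟫ := by rw [inner_neg_neg]
    have hnum : supp K (-v) - ⟪y, -v⟫ = (1 - ⟪u, v⟫) - (supp K v - ⟪x, v⟫) := by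
      rw [hsupp, hyxu, inner_neg_right, inner_sub_left]
      ring
    rw [hden2, hnum, sub_div, div_self hne0]
  rw [Filter.liminf_congr heq]
  have h2 := liminf_const_sub L g 1 hbddAbove hcobddAbove
  rw [h2]
  ring
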